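/- Let T be a bi-valent tree in Bi(m,n) equipped with a linear order on its vertex set, and let T_i be its internal subtree. Every automorphism of T restricts to an automorphism of T_i, giving a group homomorphism Res : Aut(T) → Aut(T_i). This homomorphism is surjective, and the map ψ : Aut(T_i) → Aut(T) sending an automorphism of T_i to its unique 2-ordered extension is a group homomorphism that is a section of Res. Consequently the sequence 1 → Aut_e → Aut(T) → Aut(T_i) → 1 is split exact, and Aut(T) is isomorphic to the semidirect product Aut_e ⋊ Aut(T_i), where Aut_e denotes the kernel of Res. -/

import Mathlib

open SimpleGraph

/-- The degree of a vertex of a graph, as the natural cardinality of its neighbor set. -/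
noncomputable def gdeg {V : Type*} (G : SimpleGraph V) (v : V) : ℕ :=
  (G.neighborSet v).ncard

/-- The automorphism group of a graph, as a subgroup of the permutation group of the
vertices. -/
def autGroup {V : Type*} (G : SimpleGraph V) : Subgroup (Equiv.Perm V) where
  carrier := {σ | ∀ u v, G.Adj (σ u) (σ v) ↔ G.Adj u v}
  one_mem' := by
    simp only [Set.mem_setOf_eq]
    intro u v
    simp
  mul_mem' := by
    intro a b ha hb
    simp only [Set.mem_setOf_eq] at *
    intro u v
    rw [Equiv.Perm.mul_apply, Equiv.Perm.mul_apply, ha, hb]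
  inv_mem' := by
    intro σ hσ
    simp only [Set.mem_setOf_eq] at *
    intro u v
    conv_rhs => rw [← σ.apply_symm_apply u, ← σ.apply_symm_apply v]
    exact (hσ _ _).symm

set_option linter.unusedSectionVars false
set_option linter.unusedVariables false



section Par

variable {V : Type*} [Fintype V] (T : SimpleGraph V)

/-- the unique neighbor of a leaf -/
noncomputable def par (v : V) : V :=
  if h : gdeg T v = 1 then (Set.ncard_eq_one.mp h).choose else v

lemma neighborSet_par {v : V} (h : gdeg T v = 1) : T.neighborSet v = {par T v} := by
  rw [par, dif_pos h]
  exact (Set.ncard_eq_one.mp h).choose_spec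

lemma adj_par {v : V} (h : gdeg T v = 1) : T.Adj v (par T v) := by
  have : par T v ∈ T.neighborSet v := by rw [neighborSet_par T h]; rfl
  exact this

lemma par_eq {v p : V} (h : gdeg T v = 1) (hp : T.Adj v p) : par T v = p := by
  have : p ∈ T.neighborSet v := hp
  rw [neighborSet_par T h] at this
  exact this.symm

lemma par_internal {n : ℕ} (hn : 1 < n) (hc : T.Connected)
    (hI : ∃ u, gdeg T u = n) (hbi : ∀ v, gdeg T v = 1 ∨ gdeg T v = n)
    {v : V} (h : gdeg T v = 1) : gdeg T (par T v) = n := by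
  rcases hbi (par T v) with hp | hp
  · exfalso
    obtain ⟨u, hu⟩ := hI
    have hppv : par T (par T v) = v := par_eq T hp (adj_par T h).symm
    have key : ∀ (x y : V) (w : T.Walk x y), (x = v ∨ x = par T v) → (y = v ∨ y = par T v) := by
      intro x y w
      induction w with
      | nil => exact id
      | @cons a b c hab q ih =>
        intro hx
        apply ih
        rcases hx with rfl | rfl
        · right; exact (par_eq T h hab).symm
        · left
          have := par_eq T hp hab
          rw [hppv] at this
          exact this.symm
    obtain ⟨w⟩ := hc.preconnected v u
    rcases key v u w (Or.inl rfl) with rfl | rfl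
    · rw [h] at hu; omega
    · rw [hp] at hu; omega
  · exact hp

end Par

section LvSec

variable {V : Type*} [Fintype V] [LinearOrder V] (T : SimpleGraph V)

/-- the leaf-neighbors of a vertex -/
noncomputable def Lv (p : V) : Finset V :=
  Set.Finite.toFinset (Set.toFinite {v | T.Adj p v ∧ gdeg T v = 1})

lemma mem_Lv {p v : V} : v ∈ Lv T p ↔ T.Adj p v ∧ gdeg T v = 1 :=
  Set.Finite.mem_toFinset _

/-- the unique order isomorphism between two finsets of equal cardinality -/
noncomputable def finIso (s t : Finset V) (h : s.card = t.card) : ↥s ≃o ↥t :=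
  ((s.orderIsoOfFin rfl).symm.trans (Fin.castOrderIso h)).trans (t.orderIsoOfFin rfl)

lemma internal_card {n : ℕ} (hn : 1 < n)
    (hbi : ∀ v, gdeg T v = 1 ∨ gdeg T v = n) {p : V} (hp : gdeg T p = n) :
    gdeg (T.induce {v : V | gdeg T v = n}) ⟨p, hp⟩ + (Lv T p).card = n := by
  classical
  set A : Set V := {v | T.Adj p v ∧ gdeg T v = n} with hA
  have hunion : T.neighborSet p = A ∪ ↑(Lv T p) := by
    ext x
    simp only [mem_neighborSet, Set.mem_union, hA, Set.mem_setOf_eq, Finset.coe_sort_coe,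
      Finset.mem_coe, mem_Lv]
    constructor
    · intro hx
      rcases hbi x with h1 | h1
      · exact Or.inr ⟨hx, h1⟩
      · exact Or.inl ⟨hx, h1⟩
    · rintro (⟨hx, -⟩ | ⟨hx, -⟩) <;> exact hx
  have hdisj : Disjoint A ↑(Lv T p) := by
    rw [Set.disjoint_left]
    rintro x ⟨-, hx2⟩ hx3
    rw [Finset.mem_coe, mem_Lv] at hx3
    omega
  have hcardA : A.ncard = gdeg (T.induce {v : V | gdeg T v = n}) ⟨p, hp⟩ := by
    have himg : Subtype.val '' (T.induce {v : V | gdeg T v = n}).neighborSet ⟨p, hp⟩ = A := by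
      ext x
      simp only [Set.mem_image, mem_neighborSet, comap_adj, Function.Embedding.coe_subtype,
        hA, Set.mem_setOf_eq]
      constructor
      · rintro ⟨⟨y, hy⟩, hadj, rfl⟩
        exact ⟨hadj, hy⟩
      · rintro ⟨hadj, hx⟩
        exact ⟨⟨x, hx⟩, hadj, rfl⟩
    rw [gdeg, ← himg, Set.ncard_image_of_injective _ Subtype.val_injective]
  have := Set.ncard_union_eq hdisj (Set.toFinite _) (Set.toFinite _)
  rw [← hunion] at this
  rw [← hcardA, ← Set.ncard_coe_finset (Lv T p), ← this]
  exact hp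

end LvSec

section ResSec

variable {V : Type*}

lemma gdeg_apply (T : SimpleGraph V) (σ : autGroup T) (v : V) :
    gdeg T ((σ : Equiv.Perm V) v) = gdeg T v := by
  have h : T.neighborSet ((σ : Equiv.Perm V) v) = (σ : Equiv.Perm V) '' T.neighborSet v := by
    ext x
    simp only [mem_neighborSet, Set.mem_image]
    constructor
    · intro hx
      refine ⟨(σ : Equiv.Perm V)⁻¹ x, ?_, by simp⟩
      have := σ.2 v ((σ : Equiv.Perm V)⁻¹ x)
      change (T.Adj _ _ ↔ T.Adj _ _) at this
      rw [← this]
      simpa using hx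
    · rintro ⟨y, hy, rfl⟩
      exact (σ.2 v y).mpr hy
  rw [gdeg, h, Set.ncard_image_of_injective _ (Equiv.injective _)]; rfl

variable {n : ℕ} (T : SimpleGraph V)

/-- restriction of an automorphism to the internal vertices -/
noncomputable def resPerm (σ : autGroup T) : Equiv.Perm {v : V | gdeg T v = n} :=
  Equiv.Perm.subtypePerm (σ : Equiv.Perm V)
    (fun v => by simp only [Set.mem_setOf_eq, gdeg_apply])

lemma resPerm_mem (σ : autGroup T) :
    resPerm (n := n) T σ ∈ autGroup (T.induce {v : V | gdeg T v = n}) := by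
  intro u v
  simp only [comap_adj, Function.Embedding.coe_subtype]
  exact σ.2 u v

noncomputable def Res : autGroup T →* autGroup (T.induce {v : V | gdeg T v = n}) where
  toFun σ := ⟨resPerm T σ, resPerm_mem T σ⟩
  map_one' := by ext x; rfl
  map_mul' σ τ := by ext x; rfl

lemma Res_apply (σ : autGroup T) (x : {v : V | gdeg T v = n}) :
    ((((Res (n := n) T) σ : Equiv.Perm {v : V | gdeg T v = n}) x : V)) = (σ : Equiv.Perm V) (x : V) :=
  rfl

end ResSec

section CardSec

variable {V : Type*} [Fintype V] [LinearOrder V] {n : ℕ} (T : SimpleGraph V)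

lemma gdeg_coe (τ : autGroup (T.induce {v : V | gdeg T v = n}))
    (x : {v : V | gdeg T v = n}) :
    gdeg T (((τ : Equiv.Perm _) x : {v : V | gdeg T v = n}) : V) = n :=
  ((τ : Equiv.Perm {v : V | gdeg T v = n}) x).2

lemma card_Lv (hn : 1 < n) (hbi : ∀ v, gdeg T v = 1 ∨ gdeg T v = n)
    (τ : autGroup (T.induce {v : V | gdeg T v = n})) {p : V} (hp : gdeg T p = n) :
    (Lv T p).card = (Lv T (((τ : Equiv.Perm _) ⟨p, hp⟩ : {v : V | gdeg T v = n}) : V)).card := by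
  have h1 := internal_card T hn hbi hp
  have h2 : gdeg (T.induce {v : V | gdeg T v = n}) ((τ : Equiv.Perm _) ⟨p, hp⟩)
      + (Lv T (((τ : Equiv.Perm _) ⟨p, hp⟩ : {v : V | gdeg T v = n}) : V)).card = n :=
    internal_card T hn hbi (gdeg_coe T τ ⟨p, hp⟩)
  have h3 := gdeg_apply (T.induce {v : V | gdeg T v = n}) τ ⟨p, hp⟩
  omega

end CardSec

section ExtSec

variable {V : Type*} [Fintype V] [LinearOrder V] {n : ℕ} (T : SimpleGraph V)
  (hn : 1 < n) (hbi : ∀ v, gdeg T v = 1 ∨ gdeg T v = n)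
  (hpar : ∀ v, gdeg T v = 1 → gdeg T (par T v) = n)

/-- the canonical extension of an automorphism of the internal tree -/
noncomputable def extFun (τ : autGroup (T.induce {v : V | gdeg T v = n})) (v : V) : V :=
  if h : gdeg T v = n then (((τ : Equiv.Perm _) ⟨v, h⟩ : {v : V | gdeg T v = n}) : V)
  else if h1 : gdeg T v = 1 then
    ((finIso (Lv T (par T v))
        (Lv T (((τ : Equiv.Perm _) ⟨par T v, hpar v h1⟩ : {v : V | gdeg T v = n}) : V))
        (card_Lv T hn hbi τ (hpar v h1))
        ⟨v, (mem_Lv T).mpr ⟨(adj_par T h1).symm, h1⟩⟩ :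
      Lv T (((τ : Equiv.Perm _) ⟨par T v, hpar v h1⟩ : {v : V | gdeg T v = n}) : V)) : V)
  else v

lemma extFun_internal (τ : autGroup (T.induce {v : V | gdeg T v = n})) {v : V}
    (h : gdeg T v = n) :
    extFun T hn hbi hpar τ v = (((τ : Equiv.Perm _) ⟨v, h⟩ : {v : V | gdeg T v = n}) : V) :=
  dif_pos h

lemma extFun_other (τ : autGroup (T.induce {v : V | gdeg T v = n})) {v : V}
    (h : ¬ gdeg T v = n) (h1 : ¬ gdeg T v = 1) :
    extFun T hn hbi hpar τ v = v := by
  rw [extFun, dif_neg h, dif_neg h1]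

lemma extFun_leaf_mem (τ : autGroup (T.induce {v : V | gdeg T v = n})) {v : V}
    (h1 : gdeg T v = 1) :
    extFun T hn hbi hpar τ v ∈
      Lv T (((τ : Equiv.Perm _) ⟨par T v, hpar v h1⟩ : {v : V | gdeg T v = n}) : V) := by
  rw [extFun, dif_neg (by omega), dif_pos h1]
  exact Subtype.coe_prop _

lemma extFun_leaf_gdeg (τ : autGroup (T.induce {v : V | gdeg T v = n})) {v : V}
    (h1 : gdeg T v = 1) : gdeg T (extFun T hn hbi hpar τ v) = 1 :=
  ((mem_Lv T).mp (extFun_leaf_mem T hn hbi hpar τ h1)).2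

lemma extFun_leaf_par (τ : autGroup (T.induce {v : V | gdeg T v = n})) {v : V}
    (h1 : gdeg T v = 1) :
    par T (extFun T hn hbi hpar τ v) =
      (((τ : Equiv.Perm _) ⟨par T v, hpar v h1⟩ : {v : V | gdeg T v = n}) : V) :=
  par_eq T (extFun_leaf_gdeg T hn hbi hpar τ h1)
    ((mem_Lv T).mp (extFun_leaf_mem T hn hbi hpar τ h1)).1.symm

lemma extFun_leaf_char (τ : autGroup (T.induce {v : V | gdeg T v = n})) {v p : V}
    (h1 : gdeg T v = 1) (hp : par T v = p) (hpn : gdeg T p = n) (hv : v ∈ Lv T p)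
    (e : (Lv T p : Type _) ≃o
      (Lv T (((τ : Equiv.Perm _) ⟨p, hpn⟩ : {v : V | gdeg T v = n}) : V) : Type _)) :
    extFun T hn hbi hpar τ v = ((e ⟨v, hv⟩ : Lv T _) : V) := by
  subst hp
  rw [extFun, dif_neg (by omega), dif_pos h1]
  have he : finIso (Lv T (par T v))
      (Lv T (((τ : Equiv.Perm _) ⟨par T v, hpar v h1⟩ : {v : V | gdeg T v = n}) : V))
      (card_Lv T hn hbi τ (hpar v h1)) = e := Subsingleton.elim _ _
  rw [he]

lemma extFun_one (v : V) : extFun T hn hbi hpar 1 v = v := by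
  by_cases h : gdeg T v = n
  · rw [extFun_internal T hn hbi hpar 1 h]; rfl
  · by_cases h1 : gdeg T v = 1
    · rw [extFun_leaf_char T hn hbi hpar 1 h1 rfl (hpar v h1)
        ((mem_Lv T).mpr ⟨(adj_par T h1).symm, h1⟩) (OrderIso.refl _)]; rfl
    · exact extFun_other T hn hbi hpar 1 h h1

set_option maxHeartbeats 1000000 in
lemma extFun_mul (τ₁ τ₂ : autGroup (T.induce {v : V | gdeg T v = n})) (v : V) :
    extFun T hn hbi hpar τ₁ (extFun T hn hbi hpar τ₂ v) =
      extFun T hn hbi hpar (τ₁ * τ₂) v := by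
  by_cases h : gdeg T v = n
  · rw [extFun_internal T hn hbi hpar τ₂ h,
      extFun_internal T hn hbi hpar τ₁ (gdeg_coe T τ₂ ⟨v, h⟩),
      extFun_internal T hn hbi hpar (τ₁ * τ₂) h]
    rfl
  · by_cases h1 : gdeg T v = 1
    · have hpn : gdeg T (par T v) = n := hpar v h1
      have hv : v ∈ Lv T (par T v) := (mem_Lv T).mpr ⟨(adj_par T h1).symm, h1⟩
      have hpn2 : (((τ₂ : Equiv.Perm _) ⟨par T v, hpn⟩ : {v : V | gdeg T v = n}) : V)
          ∈ {v : V | gdeg T v = n} := Subtype.coe_prop _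
      let e2 := finIso (Lv T (par T v))
        (Lv T (((τ₂ : Equiv.Perm _) ⟨par T v, hpn⟩ : {v : V | gdeg T v = n}) : V))
        (card_Lv T hn hbi τ₂ hpn)
      let e1 := finIso
        (Lv T (((τ₂ : Equiv.Perm _) ⟨par T v, hpn⟩ : {v : V | gdeg T v = n}) : V))
        (Lv T (((τ₁ : Equiv.Perm _)
          ⟨(((τ₂ : Equiv.Perm _) ⟨par T v, hpn⟩ : {v : V | gdeg T v = n}) : V), hpn2⟩ :
            {v : V | gdeg T v = n}) : V))
        (card_Lv T hn hbi τ₁ hpn2)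
      have h2 : extFun T hn hbi hpar τ₂ v = ((e2 ⟨v, hv⟩ : Lv T _) : V) :=
        extFun_leaf_char T hn hbi hpar τ₂ h1 rfl hpn hv e2
      have hw1 : gdeg T (extFun T hn hbi hpar τ₂ v) = 1 :=
        extFun_leaf_gdeg T hn hbi hpar τ₂ h1
      have hwpar : par T (extFun T hn hbi hpar τ₂ v) =
          (((τ₂ : Equiv.Perm _) ⟨par T v, hpn⟩ : {v : V | gdeg T v = n}) : V) :=
        extFun_leaf_par T hn hbi hpar τ₂ h1
      have hwv : extFun T hn hbi hpar τ₂ v ∈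
          Lv T (((τ₂ : Equiv.Perm _) ⟨par T v, hpn⟩ : {v : V | gdeg T v = n}) : V) :=
        extFun_leaf_mem T hn hbi hpar τ₂ h1
      have hL : extFun T hn hbi hpar τ₁ (extFun T hn hbi hpar τ₂ v) =
          ((e1 ⟨extFun T hn hbi hpar τ₂ v, hwv⟩ : Lv T _) : V) :=
        extFun_leaf_char T hn hbi hpar τ₁ hw1 hwpar hpn2 hwv e1
      have hR : extFun T hn hbi hpar (τ₁ * τ₂) v = (((e2.trans e1) ⟨v, hv⟩ : Lv T _) : V) :=
        extFun_leaf_char T hn hbi hpar (τ₁ * τ₂) h1 rfl hpn hv (e2.trans e1)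
      rw [hL, hR]
      exact congrArg _ (congrArg e1 (Subtype.ext h2))
    · rw [extFun_other T hn hbi hpar τ₂ h h1, extFun_other T hn hbi hpar τ₁ h h1,
        extFun_other T hn hbi hpar (τ₁ * τ₂) h h1]

end ExtSec

section SecSec

variable {V : Type*} [Fintype V] [LinearOrder V] {n : ℕ} (T : SimpleGraph V)
  (hn : 1 < n) (hbi : ∀ v, gdeg T v = 1 ∨ gdeg T v = n)
  (hpar : ∀ v, gdeg T v = 1 → gdeg T (par T v) = n)

lemma extFun_adj (τ : autGroup (T.induce {v : V | gdeg T v = n})) {u v : V}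
    (h : T.Adj u v) : T.Adj (extFun T hn hbi hpar τ u) (extFun T hn hbi hpar τ v) := by
  have key : ∀ u v : V, gdeg T u = n → gdeg T v = 1 → T.Adj u v →
      T.Adj (extFun T hn hbi hpar τ u) (extFun T hn hbi hpar τ v) := by
    intro u v hu hv huv
    have hpv : par T v = u := par_eq T hv huv.symm
    have hadj := ((mem_Lv T).mp (extFun_leaf_mem T hn hbi hpar τ hv)).1
    have hmk : (⟨par T v, hpar v hv⟩ : {x : V | gdeg T x = n}) = ⟨u, hu⟩ := Subtype.ext hpv
    rw [hmk] at hadj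
    rw [extFun_internal T hn hbi hpar τ hu]
    exact hadj
  rcases hbi u with hu | hu <;> rcases hbi v with hv | hv
  · exfalso
    have := hpar u hu
    rw [par_eq T hu h] at this
    omega
  · exact (key v u hv hu h.symm).symm
  · exact key u v hu hv h
  · rw [extFun_internal T hn hbi hpar τ hu, extFun_internal T hn hbi hpar τ hv]
    exact (τ.2 ⟨u, hu⟩ ⟨v, hv⟩).mpr h

/-- the canonical extension as a permutation -/
noncomputable def secPerm (τ : autGroup (T.induce {v : V | gdeg T v = n})) :
    Equiv.Perm V where
  toFun := extFun T hn hbi hpar τ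
  invFun := extFun T hn hbi hpar τ⁻¹
  left_inv v := by rw [extFun_mul, inv_mul_cancel, extFun_one]
  right_inv v := by rw [extFun_mul, mul_inv_cancel, extFun_one]

lemma secPerm_apply (τ : autGroup (T.induce {v : V | gdeg T v = n})) (v : V) :
    secPerm T hn hbi hpar τ v = extFun T hn hbi hpar τ v := rfl

lemma secPerm_mem (τ : autGroup (T.induce {v : V | gdeg T v = n})) :
    secPerm T hn hbi hpar τ ∈ autGroup T := by
  intro u v
  constructor
  · intro h
    have := extFun_adj T hn hbi hpar τ⁻¹ h
    rw [secPerm_apply, secPerm_apply] at this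
    rwa [extFun_mul, extFun_mul, inv_mul_cancel, extFun_one, extFun_one] at this
  · exact extFun_adj T hn hbi hpar τ

/-- the section homomorphism -/
noncomputable def secHom : autGroup (T.induce {v : V | gdeg T v = n}) →* autGroup T where
  toFun τ := ⟨secPerm T hn hbi hpar τ, secPerm_mem T hn hbi hpar τ⟩
  map_one' := by
    ext v
    exact extFun_one T hn hbi hpar v
  map_mul' τ₁ τ₂ := by
    ext v
    exact (extFun_mul T hn hbi hpar τ₁ τ₂ v).symm

lemma secHom_internal (τ : autGroup (T.induce {v : V | gdeg T v = n}))
    (x : {v : V | gdeg T v = n}) :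
    ((secHom T hn hbi hpar τ : Equiv.Perm V)) (x : V) =
      (((τ : Equiv.Perm {v : V | gdeg T v = n}) x : {v : V | gdeg T v = n}) : V) := by
  have := extFun_internal T hn hbi hpar τ x.2
  exact this

lemma res_secHom : (Res T).comp (secHom T hn hbi hpar) = MonoidHom.id _ := by
  ext τ x
  exact secHom_internal T hn hbi hpar τ ⟨x, x.2⟩

end SecSec

section OrderedSec

variable {V : Type*} [Fintype V] [LinearOrder V] {n : ℕ} (T : SimpleGraph V)
  (hn : 1 < n) (hbi : ∀ v, gdeg T v = 1 ∨ gdeg T v = n)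
  (hpar : ∀ v, gdeg T v = 1 → gdeg T (par T v) = n)

lemma extFun_ordered (hc : T.Connected) (τ : autGroup (T.induce {v : V | gdeg T v = n}))
    {v w : V} (hv1 : gdeg T v = 1) (hw1 : gdeg T w = 1) (hd : T.dist v w = 2)
    (hvw : v < w) :
    extFun T hn hbi hpar τ v < extFun T hn hbi hpar τ w := by
  -- find the common neighbor
  obtain ⟨p, hlen⟩ := hc.exists_walk_length_eq_dist v w
  rw [hd] at hlen
  obtain ⟨b, hvb, hbw⟩ : ∃ b, T.Adj v b ∧ T.Adj b w := by
    cases p with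
    | nil => simp at hlen
    | cons h q =>
      cases q with
      | nil => simp at hlen
      | @cons _ c _ h2 r =>
        have : r.length = 0 := by
          simp only [SimpleGraph.Walk.length_cons] at hlen
          omega
        have hcw := SimpleGraph.Walk.eq_of_length_eq_zero this
        subst hcw
        exact ⟨_, h, h2⟩
  have hpv : par T v = b := par_eq T hv1 hvb
  have hpw : par T w = par T v := by rw [par_eq T hw1 hbw.symm, hpv]
  have hpn : gdeg T (par T v) = n := hpar v hv1
  have hv : v ∈ Lv T (par T v) := (mem_Lv T).mpr ⟨(adj_par T hv1).symm, hv1⟩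
  have hw : w ∈ Lv T (par T v) := by
    rw [mem_Lv]
    exact ⟨by rw [hpv]; exact hbw, hw1⟩
  set e := finIso (Lv T (par T v))
    (Lv T (((τ : Equiv.Perm _) ⟨par T v, hpn⟩ : {v : V | gdeg T v = n}) : V))
    (card_Lv T hn hbi τ hpn) with he
  rw [extFun_leaf_char T hn hbi hpar τ hv1 rfl hpn hv e,
    extFun_leaf_char T hn hbi hpar τ hw1 hpw hpn hw e]
  exact Subtype.coe_lt_coe.mpr (e.lt_iff_lt.mpr (Subtype.mk_lt_mk.mpr hvw))

end OrderedSec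
lemma split_semidirect {G H : Type*} [Group G] [Group H] (φ : G →* H) (s : H →* G)
    (hs : φ.comp s = MonoidHom.id H) :
    ∃ act : H →* MulAut φ.ker, Nonempty (φ.ker ⋊[act] H ≃* G) := by
  have hsec : ∀ h, φ (s h) = h := fun h => congrArg (fun f => f h) (congrArg DFunLike.coe hs)
  refine ⟨MulAut.conjNormal.comp s, ⟨?_⟩⟩
  have hcompat : ∀ h : H, (φ.ker.subtype).comp ((MulAut.conjNormal.comp s) h).toMonoidHom
      = (MulAut.conj (s h)).toMonoidHom.comp φ.ker.subtype := by
    intro h; ext k; simp [MulAut.conjNormal_apply]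
  let f : φ.ker ⋊[MulAut.conjNormal.comp s] H →* G :=
    SemidirectProduct.lift φ.ker.subtype s hcompat
  have hf : ∀ x : φ.ker ⋊[MulAut.conjNormal.comp s] H, f x = (x.left : G) * s x.right := by
    intro x; simp [f, SemidirectProduct.lift]
  refine MulEquiv.ofBijective f ⟨fun x y hxy => ?inj, fun g => ?surj⟩
  case inj =>
    rw [hf, hf] at hxy
    have h2 : x.right = y.right := by
      have := congrArg φ hxy
      simpa [hsec, x.left.2, y.left.2, MonoidHom.mem_ker.mp x.left.2,
        MonoidHom.mem_ker.mp y.left.2] using this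
    have h1 : (x.left : G) = y.left := by
      rw [h2] at hxy; exact mul_right_cancel hxy
    exact SemidirectProduct.ext (Subtype.ext h1) h2
  case surj =>
    refine ⟨⟨⟨g * (s (φ g))⁻¹, ?_⟩, φ g⟩, ?_⟩
    · simp [MonoidHom.mem_ker, hsec]
    · simp [hf]

/-- For a bi-valent tree `T` in `Bi(m, n)` with a linear order on its
vertices, restriction to the internal subtree gives a surjective group homomorphism
`Res : Aut(T) →* Aut(T_i)`; the map sending an automorphism of `T_i` to its unique
`2`-ordered extension is a group-homomorphism section of `Res`. Hence the sequence
`1 → Aut_e → Aut(T) → Aut(T_i) → 1` is split exact and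
`Aut(T) ≃ Aut_e ⋊ Aut(T_i)`, where `Aut_e = ker Res`. -/
theorem stmt_3 {V : Type*} [Fintype V] [LinearOrder V] {n m : ℕ} (hn : 1 < n)
    (T : SimpleGraph V) (hT : T.IsTree)
    (hbi : ∀ v, gdeg T v = 1 ∨ gdeg T v = n)
    (hm : {v | gdeg T v = n}.ncard = m) :
    ∃ Res : autGroup T →* autGroup (T.induce {v | gdeg T v = n}),
      (∀ (σ : autGroup T) (x : {v | gdeg T v = n}),
          (((Res σ : Equiv.Perm {v | gdeg T v = n}) x : V)) = (σ : Equiv.Perm V) (x : V)) ∧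
      Function.Surjective Res ∧
      ∃ sec : autGroup (T.induce {v | gdeg T v = n}) →* autGroup T,
        Res.comp sec = MonoidHom.id _ ∧
        (∀ (τ : autGroup (T.induce {v | gdeg T v = n})) (x : {v | gdeg T v = n}),
            (sec τ : Equiv.Perm V) (x : V) =
              (((τ : Equiv.Perm {v | gdeg T v = n}) x : {v | gdeg T v = n}) : V)) ∧
        (∀ (τ : autGroup (T.induce {v | gdeg T v = n})) (v w : V),
            gdeg T v = 1 → gdeg T w = 1 → T.dist v w = 2 → v < w →
            (sec τ : Equiv.Perm V) v < (sec τ : Equiv.Perm V) w) ∧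
        ∃ act : autGroup (T.induce {v | gdeg T v = n}) →* MulAut Res.ker,
          Nonempty (Res.ker ⋊[act] autGroup (T.induce {v | gdeg T v = n}) ≃* autGroup T) := by
  by_cases hI : ∃ u, gdeg T u = n
  · -- main case : there is an internal vertex
    have hpar : ∀ v, gdeg T v = 1 → gdeg T (par T v) = n :=
      fun v h => par_internal T hn hT.isConnected hI hbi h
    refine ⟨Res T, Res_apply T, ?_, secHom T hn hbi hpar, res_secHom T hn hbi hpar,
      secHom_internal T hn hbi hpar, ?_, ?_⟩
    · intro τ
      exact ⟨secHom T hn hbi hpar τ, DFunLike.congr_fun (res_secHom T hn hbi hpar) τ⟩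
    · intro τ v w hv hw hd hvw
      exact extFun_ordered T hn hbi hpar hT.isConnected τ hv hw hd hvw
    · exact split_semidirect (Res T) (secHom T hn hbi hpar) (res_secHom T hn hbi hpar)
  · -- degenerate case : no internal vertex
    haveI : IsEmpty ({v : V | gdeg T v = n}) := ⟨fun x => hI ⟨x, x.2⟩⟩
    haveI : Subsingleton (Equiv.Perm ({v : V | gdeg T v = n})) :=
      ⟨fun a b => Equiv.ext fun x => isEmptyElim x⟩
    haveI : Subsingleton (autGroup (T.induce {v : V | gdeg T v = n})) :=
      ⟨fun a b => Subtype.ext (Subsingleton.elim _ _)⟩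
    have hsec : (Res (n := n) T).comp 1 = MonoidHom.id _ :=
      MonoidHom.ext fun τ => Subsingleton.elim _ _
    refine ⟨Res T, Res_apply T, ?_, 1, hsec, ?_, ?_, ?_⟩
    · intro τ
      exact ⟨1, Subsingleton.elim _ _⟩
    · intro τ x
      exact isEmptyElim x
    · intro τ v w hv hw hd hvw
      exact hvw
    · exact split_semidirect (Res T) 1 hsec
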